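/- Let (a, b, c) be a 2-color Sturmian lattice with passage κ whose slope α (the common density of 1's in the gap words) is irrational. Then each of the three gap words (a_i), (b_j), (c_k) is a Sturmian word of slope α; that is, for each word w ∈ {(a_i), (b_j), (c_k)} there exists ρ ∈ ℝ such that either w_n = ⌊(n+1)α + ρ⌋ − ⌊nα + ρ⌋ for all n ∈ ℤ, or w_n = ⌈(n+1)α + ρ⌉ − ⌈nα + ρ⌉ for all n ∈ ℤ. -/

import Mathlib

open Filter

/-- A bi-infinite word `w : ℤ → ℤ` is a Sturmian word of (irrational) slope `α` if it is a
lower or upper mechanical word of slope `α` for some intercept `ρ`. -/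
def IsSturmianWord (w : ℤ → ℤ) (α : ℝ) : Prop :=
  ∃ ρ : ℝ,
    (∀ n : ℤ, w n = ⌊((n : ℝ) + 1) * α + ρ⌋ - ⌊(n : ℝ) * α + ρ⌋) ∨
    (∀ n : ℤ, w n = ⌈((n : ℝ) + 1) * α + ρ⌉ - ⌈(n : ℝ) * α + ρ⌉)

/-- Signed partial sums of a bi-infinite word. -/
noncomputable def Sz (w : ℤ → ℤ) (n : ℤ) : ℤ :=
  (∑ i ∈ Finset.Ico 0 n, w i) - ∑ i ∈ Finset.Ico n 0, w i

lemma sum_Ico_consec {M : Type*} [AddCommMonoid M] (f : ℤ → M) {m n k : ℤ}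
    (h1 : m ≤ n) (h2 : n ≤ k) :
    (∑ i ∈ Finset.Ico m n, f i) + ∑ i ∈ Finset.Ico n k, f i = ∑ i ∈ Finset.Ico m k, f i := by
  rw [← Finset.sum_union (Finset.Ico_disjoint_Ico_consecutive m n k),
    Finset.Ico_union_Ico_eq_Ico h1 h2]

lemma Ico_succ_singleton (n : ℤ) : Finset.Ico n (n + 1) = {n} := by
  ext x
  simp only [Finset.mem_Ico, Finset.mem_singleton]
  omega

lemma Sz_sub (w : ℤ → ℤ) {m n : ℤ} (h : m ≤ n) :
    Sz w n - Sz w m = ∑ i ∈ Finset.Ico m n, w i := by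
  rcases le_or_gt 0 m with hm | hm
  · have h1 : Finset.Ico m (0:ℤ) = ∅ := Finset.Ico_eq_empty (by omega)
    have h2 : Finset.Ico n (0:ℤ) = ∅ := Finset.Ico_eq_empty (by omega)
    have h3 := sum_Ico_consec w hm h
    simp only [Sz, h1, h2, Finset.sum_empty, sub_zero]
    omega
  · rcases le_or_gt 0 n with hn | hn
    · have h1 : Finset.Ico (0:ℤ) m = ∅ := Finset.Ico_eq_empty (by omega)
      have h2 : Finset.Ico n (0:ℤ) = ∅ := Finset.Ico_eq_empty (by omega)
      have h3 := sum_Ico_consec w hm.le hn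
      simp only [Sz, h1, h2, Finset.sum_empty, sub_zero, zero_sub]
      omega
    · have h1 : Finset.Ico (0:ℤ) m = ∅ := Finset.Ico_eq_empty (by omega)
      have h2 : Finset.Ico (0:ℤ) n = ∅ := Finset.Ico_eq_empty (by omega)
      have h3 := sum_Ico_consec w h hn.le
      simp only [Sz, h1, h2, Finset.sum_empty, zero_sub]
      omega

lemma Sz_step (w : ℤ → ℤ) (n : ℤ) : Sz w (n + 1) - Sz w n = w n := by
  rw [Sz_sub w (by omega : n ≤ n + 1), Ico_succ_singleton, Finset.sum_singleton]

lemma sum_Ico_telescope (g : ℤ → ℝ) {m n : ℤ} (h : m ≤ n) :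
    ∑ i ∈ Finset.Ico m n, (g (i + 1) - g i) = g n - g m := by
  refine Int.le_induction
    (motive := fun k _ => ∑ i ∈ Finset.Ico m k, (g (i + 1) - g i) = g k - g m) (by simp)
    (fun k hk ih => ?_) n h
  show ∑ i ∈ Finset.Ico m (k + 1), (g (i + 1) - g i) = g (k + 1) - g m
  rw [← sum_Ico_consec _ hk (by omega : k ≤ k + 1), ih, Ico_succ_singleton,
    Finset.sum_singleton]
  ring

lemma count_eq (v : ℤ → ℤ) (hv : ∀ n, v n = 0 ∨ v n = 1) (N : ℕ) :
    ({n : ℤ | -(N : ℤ) ≤ n ∧ n < (N : ℤ) ∧ v n = 1}.ncard : ℝ)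
      = (((Sz v (N : ℤ) - Sz v (-(N : ℤ))) : ℤ) : ℝ) := by
  classical
  have hset : {n : ℤ | -(N : ℤ) ≤ n ∧ n < (N : ℤ) ∧ v n = 1}
      = ↑((Finset.Ico (-(N : ℤ)) (N : ℤ)).filter (fun n => v n = 1)) := by
    ext x
    simp only [Set.mem_setOf_eq, Finset.coe_filter, Finset.mem_Ico, Set.mem_setOf_eq]
    tauto
  rw [hset, Set.ncard_coe_finset]
  have hZ : ((((Finset.Ico (-(N : ℤ)) (N : ℤ)).filter (fun n => v n = 1)).card : ℤ))
      = Sz v (N : ℤ) - Sz v (-(N : ℤ)) := by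
    rw [Sz_sub v (by omega : -(N:ℤ) ≤ (N:ℤ))]
    rw [← Finset.sum_filter_add_sum_filter_not (Finset.Ico (-(N:ℤ)) (N:ℤ)) (fun n => v n = 1) v]
    have h1 : ∑ i ∈ (Finset.Ico (-(N:ℤ)) (N:ℤ)).filter (fun n => v n = 1), v i
        = ∑ i ∈ (Finset.Ico (-(N:ℤ)) (N:ℤ)).filter (fun n => v n = 1), 1 := by
      apply Finset.sum_congr rfl
      intro i hi
      exact (Finset.mem_filter.mp hi).2
    have h2 : ∑ i ∈ (Finset.Ico (-(N:ℤ)) (N:ℤ)).filter (fun n => ¬ v n = 1), v i = 0 := by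
      apply Finset.sum_eq_zero
      intro i hi
      rcases hv i with h | h
      · exact h
      · exact absurd h (Finset.mem_filter.mp hi).2
    rw [h1, h2, Finset.sum_const, add_zero]
    simp
  rw [← hZ]
  push_cast
  ring

lemma density_lower (v : ℤ → ℤ) (α : ℝ)
    (hd : Tendsto (fun N : ℕ =>
      ((((Sz v (N : ℤ) - Sz v (-(N : ℤ))) : ℤ) : ℝ)) / (2 * (N : ℝ))) atTop (nhds α))
    (L : ℤ) (hL : 0 < L) (r : ℝ)
    (hwin : ∀ p : ℤ, r ≤ (((Sz v (p + L) - Sz v p) : ℤ) : ℝ)) : r ≤ (L : ℝ) * α := by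
  set l : ℕ := L.toNat with hldef
  have hlL : (l : ℤ) = L := Int.toNat_of_nonneg hL.le
  have hl0 : 0 < l := by omega
  have hcomp : Tendsto (fun K : ℕ => K * l) atTop atTop :=
    tendsto_atTop_mono (fun K => Nat.le_mul_of_pos_right K hl0) tendsto_id
  have h2 := hd.comp hcomp
  have key : ∀ K : ℕ, 1 ≤ K → r / (l : ℝ)
      ≤ ((((Sz v ((K * l : ℕ) : ℤ) - Sz v (-((K * l : ℕ) : ℤ))) : ℤ) : ℝ))
        / (2 * ((K * l : ℕ) : ℝ)) := by
    intro K hK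
    set g : ℕ → ℝ := fun j => ((Sz v (-((K * l : ℕ) : ℤ) + (j : ℤ) * L) : ℤ) : ℝ) with hg
    have htel := Finset.sum_range_sub g (2 * K)
    have hterm : ∀ j : ℕ, r ≤ g (j + 1) - g j := by
      intro j
      have := hwin (-((K * l : ℕ) : ℤ) + (j : ℤ) * L)
      have harg : -((K * l : ℕ) : ℤ) + (j : ℤ) * L + L = -((K * l : ℕ) : ℤ) + ((j : ℕ) + 1 : ℤ) * L := by
        ring
      rw [harg] at this
      simp only [hg]
      push_cast
      push_cast at this
      linarith
    have hsum : (2 * K : ℝ) * r ≤ g (2 * K) - g 0 := by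
      rw [← htel]
      calc (2 * K : ℝ) * r = ∑ _j ∈ Finset.range (2 * K), r := by
            rw [Finset.sum_const, Finset.card_range, nsmul_eq_mul]; push_cast; ring
        _ ≤ ∑ j ∈ Finset.range (2 * K), (g (j + 1) - g j) :=
            Finset.sum_le_sum (fun j _ => hterm j)
    have hg2K : g (2 * K) = ((Sz v ((K * l : ℕ) : ℤ) : ℤ) : ℝ) := by
      simp only [hg]
      congr 1
      push_cast [← hlL]
      ring_nf
    have hg0 : g 0 = ((Sz v (-((K * l : ℕ) : ℤ)) : ℤ) : ℝ) := by
      simp only [hg]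
      norm_num
    rw [hg2K, hg0] at hsum
    rw [div_le_div_iff₀ (by positivity) (by positivity)]
    have hcast : ((K * l : ℕ) : ℝ) = (K : ℝ) * (l : ℝ) := by push_cast; ring
    push_cast
    push_cast at hsum
    nlinarith [hl0, (by positivity : (0:ℝ) < (K:ℝ)), (by exact_mod_cast hl0 : (0:ℝ) < (l:ℝ))]
  have hα : r / (l : ℝ) ≤ α :=
    ge_of_tendsto h2 (eventually_atTop.2 ⟨1, fun K hK => key K hK⟩)
  have hl' : (0 : ℝ) < (l : ℝ) := by exact_mod_cast hl0
  have := (div_le_iff₀ hl').mp hα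
  calc r ≤ α * (l : ℝ) := this
    _ = (L : ℝ) * α := by rw [← hlL]; push_cast; ring

lemma density_upper (v : ℤ → ℤ) (α : ℝ)
    (hd : Tendsto (fun N : ℕ =>
      ((((Sz v (N : ℤ) - Sz v (-(N : ℤ))) : ℤ) : ℝ)) / (2 * (N : ℝ))) atTop (nhds α))
    (L : ℤ) (hL : 0 < L) (r : ℝ)
    (hwin : ∀ p : ℤ, (((Sz v (p + L) - Sz v p) : ℤ) : ℝ) ≤ r) : (L : ℝ) * α ≤ r := by
  set l : ℕ := L.toNat with hldef
  have hlL : (l : ℤ) = L := Int.toNat_of_nonneg hL.le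
  have hl0 : 0 < l := by omega
  have hcomp : Tendsto (fun K : ℕ => K * l) atTop atTop :=
    tendsto_atTop_mono (fun K => Nat.le_mul_of_pos_right K hl0) tendsto_id
  have h2 := hd.comp hcomp
  have key : ∀ K : ℕ, 1 ≤ K →
      ((((Sz v ((K * l : ℕ) : ℤ) - Sz v (-((K * l : ℕ) : ℤ))) : ℤ) : ℝ))
        / (2 * ((K * l : ℕ) : ℝ)) ≤ r / (l : ℝ) := by
    intro K hK
    set g : ℕ → ℝ := fun j => ((Sz v (-((K * l : ℕ) : ℤ) + (j : ℤ) * L) : ℤ) : ℝ) with hg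
    have htel := Finset.sum_range_sub g (2 * K)
    have hterm : ∀ j : ℕ, g (j + 1) - g j ≤ r := by
      intro j
      have := hwin (-((K * l : ℕ) : ℤ) + (j : ℤ) * L)
      have harg : -((K * l : ℕ) : ℤ) + (j : ℤ) * L + L = -((K * l : ℕ) : ℤ) + ((j : ℕ) + 1 : ℤ) * L := by
        ring
      rw [harg] at this
      simp only [hg]
      push_cast
      push_cast at this
      linarith
    have hsum : g (2 * K) - g 0 ≤ (2 * K : ℝ) * r := by
      rw [← htel]
      calc ∑ j ∈ Finset.range (2 * K), (g (j + 1) - g j)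
          ≤ ∑ _j ∈ Finset.range (2 * K), r := Finset.sum_le_sum (fun j _ => hterm j)
        _ = (2 * K : ℝ) * r := by
            rw [Finset.sum_const, Finset.card_range, nsmul_eq_mul]; push_cast; ring
    have hg2K : g (2 * K) = ((Sz v ((K * l : ℕ) : ℤ) : ℤ) : ℝ) := by
      simp only [hg]
      congr 1
      push_cast [← hlL]
      ring_nf
    have hg0 : g 0 = ((Sz v (-((K * l : ℕ) : ℤ)) : ℤ) : ℝ) := by
      simp only [hg]
      norm_num
    rw [hg2K, hg0] at hsum
    rw [div_le_div_iff₀ (by positivity) (by positivity)]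
    push_cast
    push_cast at hsum
    nlinarith [hl0, (by positivity : (0:ℝ) < (K:ℝ)), (by exact_mod_cast hl0 : (0:ℝ) < (l:ℝ))]
  have hα : α ≤ r / (l : ℝ) :=
    le_of_tendsto h2 (eventually_atTop.2 ⟨1, fun K hK => key K hK⟩)
  have hl' : (0 : ℝ) < (l : ℝ) := by exact_mod_cast hl0
  have := (le_div_iff₀ hl').mp hα
  calc (L : ℝ) * α = α * (l : ℝ) := by rw [← hlL]; push_cast; ring
    _ ≤ r := this

lemma real_window (u : ℤ → ℝ) (w : ℤ → ℤ) (κ : ℝ)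
    (h : ∀ i : ℤ, (w i : ℝ) = u (i + 1) - u i - κ) {m n : ℤ} (hmn : m ≤ n) :
    (((Sz w n - Sz w m) : ℤ) : ℝ) = u n - u m - ((n : ℝ) - (m : ℝ)) * κ := by
  rw [Sz_sub w hmn]
  push_cast
  have e1 : ∀ i ∈ Finset.Ico m n, (w i : ℝ) = (u (i + 1) - u i) - κ := fun i _ => h i
  rw [Finset.sum_congr rfl e1, Finset.sum_sub_distrib, sum_Ico_telescope u hmn,
    Finset.sum_const, Int.card_Ico]
  have : ((n - m).toNat : ℝ) = (n : ℝ) - (m : ℝ) := by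
    have h0 : (((n - m).toNat : ℤ)) = n - m := Int.toNat_of_nonneg (by omega)
    exact_mod_cast congrArg (fun z : ℤ => (z : ℝ)) h0
  rw [nsmul_eq_mul, this]

lemma sturmian_of_bal (w v : ℤ → ℤ) (α : ℝ) (hirr : Irrational α)
    (hd : Tendsto (fun N : ℕ =>
      ((((Sz v (N : ℤ) - Sz v (-(N : ℤ))) : ℤ) : ℝ)) / (2 * (N : ℝ))) atTop (nhds α))
    (bal : ∀ m n p q : ℤ, m ≤ n → q - p = n - m →
      |(((Sz w n - Sz w m) : ℤ) : ℝ) - (((Sz v q - Sz v p) : ℤ) : ℝ)| ≤ 1) :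
    IsSturmianWord w α := by
  set d : ℤ → ℝ := fun n => ((Sz w n : ℤ) : ℝ) - (n : ℝ) * α with hd_def
  have step1 : ∀ n m : ℤ, d n ≤ d m + 1 := by
    intro n m
    rcases lt_trichotomy n m with h | h | h
    · by_contra hcon
      push_neg at hcon
      set L := m - n with hLdef
      have hL : 0 < L := by omega
      have hwin : ∀ p : ℤ, (((Sz v (p + L) - Sz v p) : ℤ) : ℝ)
          ≤ (((Sz w m - Sz w n) : ℤ) : ℝ) + 1 := by
        intro p
        have hb := abs_le.mp (bal n m p (p + L) h.le (by omega))
        linarith [hb.1]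
      have hub := density_upper v α hd L hL _ hwin
      have hLr : ((L : ℤ) : ℝ) = (m : ℝ) - (n : ℝ) := by rw [hLdef]; push_cast; ring
      simp only [hd_def] at hcon
      rw [hLr] at hub
      push_cast at hub hcon ⊢
      linarith
    · subst h; linarith
    · by_contra hcon
      push_neg at hcon
      set L := n - m with hLdef
      have hL : 0 < L := by omega
      have hwin : ∀ p : ℤ, (((Sz w n - Sz w m) : ℤ) : ℝ) - 1
          ≤ (((Sz v (p + L) - Sz v p) : ℤ) : ℝ) := by
        intro p
        have hb := abs_le.mp (bal m n p (p + L) h.le (by omega))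
        linarith [hb.2]
      have hlb := density_lower v α hd L hL _ hwin
      have hLr : ((L : ℤ) : ℝ) = (n : ℝ) - (m : ℝ) := by rw [hLdef]; push_cast; ring
      simp only [hd_def] at hcon
      rw [hLr] at hlb
      push_cast at hlb hcon ⊢
      linarith
  have hBddA : BddAbove (Set.range d) := ⟨d 0 + 1, by rintro y ⟨n, rfl⟩; exact step1 n 0⟩
  have hne : (Set.range d).Nonempty := ⟨d 0, 0, rfl⟩
  set M := sSup (Set.range d) with hM
  set mI := sInf (Set.range d) with hmI
  have hle : ∀ n, d n ≤ M := fun n => le_csSup hBddA ⟨n, rfl⟩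
  have hBddB : BddBelow (Set.range d) := ⟨d 0 - 1, by rintro y ⟨n, rfl⟩; linarith [step1 0 n]⟩
  have hge : ∀ n, mI ≤ d n := fun n => csInf_le hBddB ⟨n, rfl⟩
  have hMm : M ≤ mI + 1 := by
    apply csSup_le hne
    rintro y ⟨n, rfl⟩
    have : d n - 1 ≤ mI := by
      apply le_csInf hne
      rintro y ⟨m, rfl⟩
      linarith [step1 n m]
    linarith
  by_cases hA : ∃ n₀, d n₀ = M
  · obtain ⟨n₀, hn₀⟩ := hA
    refine ⟨M, Or.inl fun n => ?_⟩
    have hfl : ∀ k : ℤ, ⌊(k : ℝ) * α + M⌋ = Sz w k := by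
      intro k
      rw [Int.floor_eq_iff]
      constructor
      · have := hle k
        simp only [hd_def] at this
        linarith
      · have hlt : M - d k < 1 := by
          rcases eq_or_ne k n₀ with rfl | hne'
          · linarith [hn₀.symm.le]
          · have h1 : d n₀ - d k ≤ 1 := by linarith [step1 n₀ k]
            have h2 : d n₀ - d k ≠ 1 := by
              intro heq
              simp only [hd_def] at heq
              have hz : ((n₀ - k : ℤ) : ℝ) * α = ((Sz w n₀ - Sz w k - 1 : ℤ) : ℝ) := by
                push_cast
                linarith
              exact (hirr.intCast_mul (by omega : n₀ - k ≠ 0)).ne_int _ hz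
            rw [← hn₀]
            exact lt_of_le_of_ne h1 h2
        simp only [hd_def] at hlt
        push_cast
        linarith
    have hstep := Sz_step w n
    have e : ((n : ℝ) + 1) * α + M = (((n + 1 : ℤ)) : ℝ) * α + M := by push_cast; ring
    rw [e, hfl (n + 1), hfl n]
    omega
  · push_neg at hA
    have hlt : ∀ n, d n < M := fun n => lt_of_le_of_ne (hle n) (hA n)
    refine ⟨mI, Or.inr fun n => ?_⟩
    have hcl : ∀ k : ℤ, ⌈(k : ℝ) * α + mI⌉ = Sz w k := by
      intro k
      rw [Int.ceil_eq_iff]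
      constructor
      · have h1 := hlt k
        have h2 := hMm
        simp only [hd_def] at h1
        push_cast
        linarith
      · have := hge k
        simp only [hd_def] at this
        linarith
    have hstep := Sz_step w n
    have e : ((n : ℝ) + 1) * α + mI = (((n + 1 : ℤ)) : ℝ) * α + mI := by push_cast; ring
    rw [e, hcl (n + 1), hcl n]
    omega

theorem stmt10 (a b c : ℤ → ℝ) (κ : ℝ) (hκ : 1 ≤ κ)
    (hSL : ∀ i j k : ℤ, i + j + k = 0 → |a i + b j + c k| = 1 / 2)
    (wa wb wc : ℤ → ℤ)
    (hga : ∀ i : ℤ, (wa i = 0 ∧ a (i + 1) - a i = κ) ∨ (wa i = 1 ∧ a (i + 1) - a i = κ + 1))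
    (hgb : ∀ j : ℤ, (wb j = 0 ∧ b (j + 1) - b j = κ) ∨ (wb j = 1 ∧ b (j + 1) - b j = κ + 1))
    (hgc : ∀ k : ℤ, (wc k = 0 ∧ c (k + 1) - c k = κ) ∨ (wc k = 1 ∧ c (k + 1) - c k = κ + 1))
    (α : ℝ) (hirr : Irrational α)
    (hsa : Tendsto (fun N : ℕ =>
      (({n : ℤ | -(N : ℤ) ≤ n ∧ n < (N : ℤ) ∧ wa n = 1}.ncard : ℝ)) / (2 * (N : ℝ)))
      atTop (nhds α))
    (hsb : Tendsto (fun N : ℕ =>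
      (({n : ℤ | -(N : ℤ) ≤ n ∧ n < (N : ℤ) ∧ wb n = 1}.ncard : ℝ)) / (2 * (N : ℝ)))
      atTop (nhds α))
    (hsc : Tendsto (fun N : ℕ =>
      (({n : ℤ | -(N : ℤ) ≤ n ∧ n < (N : ℤ) ∧ wc n = 1}.ncard : ℝ)) / (2 * (N : ℝ)))
      atTop (nhds α)) :
    IsSturmianWord wa α ∧ IsSturmianWord wb α ∧ IsSturmianWord wc α := by
  have hwa01 : ∀ i : ℤ, wa i = 0 ∨ wa i = 1 := fun i => (hga i).imp And.left And.left
  have hwc01 : ∀ i : ℤ, wc i = 0 ∨ wc i = 1 := fun i => (hgc i).imp And.left And.left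
  have hra : ∀ i : ℤ, ((wa i : ℤ) : ℝ) = a (i + 1) - a i - κ := by
    intro i
    rcases hga i with ⟨h0, h'⟩ | ⟨h0, h'⟩ <;> rw [h0, h'] <;> push_cast <;> ring
  have hrb : ∀ i : ℤ, ((wb i : ℤ) : ℝ) = b (i + 1) - b i - κ := by
    intro i
    rcases hgb i with ⟨h0, h'⟩ | ⟨h0, h'⟩ <;> rw [h0, h'] <;> push_cast <;> ring
  have hrc : ∀ i : ℤ, ((wc i : ℤ) : ℝ) = c (i + 1) - c i - κ := by
    intro i
    rcases hgc i with ⟨h0, h'⟩ | ⟨h0, h'⟩ <;> rw [h0, h'] <;> push_cast <;> ring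
  simp only [count_eq wa hwa01] at hsa
  simp only [count_eq wc hwc01] at hsc
  have bal_ac : ∀ m n p q : ℤ, m ≤ n → q - p = n - m →
      |(((Sz wa n - Sz wa m) : ℤ) : ℝ) - (((Sz wc q - Sz wc p) : ℤ) : ℝ)| ≤ 1 := by
    intro m n p q hmn hpq
    have hpq' : p ≤ q := by omega
    rw [real_window a wa κ hra hmn, real_window c wc κ hrc hpq']
    set j : ℤ := -n - p with hj
    have h1 := hSL n j (-n - j) (by ring)
    have h2 := hSL m j (-m - j) (by ring)
    have e1 : -n - j = p := by omega
    have e2 : -m - j = q := by omega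
    rw [e1] at h1
    rw [e2] at h2
    have hc : (q : ℝ) - (p : ℝ) = (n : ℝ) - (m : ℝ) := by
      exact_mod_cast congrArg (fun z : ℤ => (z : ℝ)) hpq
    have key : (a n - a m - ((n : ℝ) - (m : ℝ)) * κ) - (c q - c p - ((q : ℝ) - (p : ℝ)) * κ)
        = (a n + b j + c p) - (a m + b j + c q) := by
      rw [hc]; ring
    rw [key]
    have ha1 := abs_le.mp h1.le
    have ha2 := abs_le.mp h2.le
    rw [abs_le]
    constructor <;> linarith [ha1.1, ha1.2, ha2.1, ha2.2]
  have bal_bc : ∀ m n p q : ℤ, m ≤ n → q - p = n - m →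
      |(((Sz wb n - Sz wb m) : ℤ) : ℝ) - (((Sz wc q - Sz wc p) : ℤ) : ℝ)| ≤ 1 := by
    intro m n p q hmn hpq
    have hpq' : p ≤ q := by omega
    rw [real_window b wb κ hrb hmn, real_window c wc κ hrc hpq']
    set i : ℤ := -n - p with hi
    have h1 := hSL i n (-i - n) (by ring)
    have h2 := hSL i m (-i - m) (by ring)
    have e1 : -i - n = p := by omega
    have e2 : -i - m = q := by omega
    rw [e1] at h1
    rw [e2] at h2
    have hc : (q : ℝ) - (p : ℝ) = (n : ℝ) - (m : ℝ) := by
      exact_mod_cast congrArg (fun z : ℤ => (z : ℝ)) hpq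
    have key : (b n - b m - ((n : ℝ) - (m : ℝ)) * κ) - (c q - c p - ((q : ℝ) - (p : ℝ)) * κ)
        = (a i + b n + c p) - (a i + b m + c q) := by
      rw [hc]; ring
    rw [key]
    have ha1 := abs_le.mp h1.le
    have ha2 := abs_le.mp h2.le
    rw [abs_le]
    constructor <;> linarith [ha1.1, ha1.2, ha2.1, ha2.2]
  have bal_ca : ∀ m n p q : ℤ, m ≤ n → q - p = n - m →
      |(((Sz wc n - Sz wc m) : ℤ) : ℝ) - (((Sz wa q - Sz wa p) : ℤ) : ℝ)| ≤ 1 := by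
    intro m n p q hmn hpq
    rw [abs_sub_comm]
    exact bal_ac p q m n (by omega) (by omega)
  exact ⟨sturmian_of_bal wa wc α hirr hsc bal_ac,
    sturmian_of_bal wb wc α hirr hsc bal_bc,
    sturmian_of_bal wc wa α hirr hsa bal_ca⟩
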